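/- For every ε > 0 there exists ρ > 0 and a connected graph G on n vertices such that h_ρ(G) ≠ 1 and h_ρ(G) ≥ (2 − ε)ρn. In particular, for n = ⌊1/ρ⌋ + 2, every contagious set for the complete graph K_n with respect to ρ has size at least 2, and 2 ≥ 2ρn − 4ρ. -/

import Mathlib

open Finset
open scoped Classical

variable {V : Type*}

/-- One step of the bootstrap percolation process in `G` with thresholds `φ`. -/
noncomputable def percStep [Fintype V] (G : SimpleGraph V) (φ : V → ℝ) (A : Finset V) :
    Finset V :=
  A ∪ Finset.univ.filter fun v => φ v ≤ ((A.filter fun u => G.Adj v u).card : ℝ)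

/-- `A` is a contagious set for `G` with respect to thresholds `φ`. -/
def Contagious [Fintype V] (G : SimpleGraph V) (φ : V → ℝ) (A : Finset V) : Prop :=
  ∃ k, (percStep G φ)^[k] A = Finset.univ

/-- The final infected set `H_{φ,G}(A)`. -/
noncomputable def percClosure [Fintype V] (G : SimpleGraph V) (φ : V → ℝ) (A : Finset V) :
    Finset V :=
  (percStep G φ)^[Fintype.card V] A

/-- `h_ρ(G)`: minimum size of a contagious set for ratio `ρ`. -/
noncomputable def minContagious [Fintype V] (G : SimpleGraph V) (ρ : ℝ) : ℕ :=
  sInf {k | ∃ A : Finset V, A.card = k ∧ Contagious G (fun v => ρ * (G.degree v : ℝ)) A}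

/-- Observation 1: for every `ε > 0` there exist `ρ > 0` and a connected
graph `G` on `n` vertices with `h_ρ(G) ≠ 1` and `h_ρ(G) ≥ (2 - ε)ρn`. -/
theorem exists_graph_min_contagious_ge_two_sub_eps :
    ∀ ε : ℝ, 0 < ε → ∃ ρ : ℝ, 0 < ρ ∧ ∃ (n : ℕ) (G : SimpleGraph (Fin n)),
      G.Connected ∧ minContagious G ρ ≠ 1 ∧
        (2 - ε) * ρ * (n : ℝ) ≤ (minContagious G ρ : ℝ) := by
  intro ε hε
  set ρ : ℝ := min (ε / 4) (1 / 2) with hρdef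
  have hρpos : 0 < ρ := lt_min (by linarith) (by norm_num)
  have hρε : ρ ≤ ε / 4 := min_le_left _ _
  have hinv : ρ * (1 / ρ) = 1 := by field_simp
  set n : ℕ := ⌊1 / ρ⌋₊ + 2 with hndef
  have hfloor : (1 : ℝ) / ρ < (⌊1 / ρ⌋₊ : ℝ) + 1 := Nat.lt_floor_add_one _
  have hfl : (⌊1 / ρ⌋₊ : ℝ) ≤ 1 / ρ := Nat.floor_le (by positivity)
  -- degree is instance-irrelevant and equals n - 1
  have hdeg' : ∀ (v : Fin n) (i : Fintype ((⊤ : SimpleGraph (Fin n)).neighborSet v)),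
      @SimpleGraph.degree (Fin n) ⊤ v i = n - 1 := by
    intro v i
    have h := SimpleGraph.complete_graph_degree (V := Fin n) v
    rw [Fintype.card_fin] at h
    convert h using 2 <;> exact Subsingleton.elim _ _
  -- get a handle on the canonical threshold function inside `minContagious`
  have hkey : ∃ φc : Fin n → ℝ, (∀ v, (1 : ℝ) < φc v) ∧
      minContagious (⊤ : SimpleGraph (Fin n)) ρ
        = sInf {k | ∃ A : Finset (Fin n), A.card = k ∧ Contagious ⊤ φc A} := by
    refine ⟨_, ?_, rfl⟩
    intro v
    show (1 : ℝ) < ρ * _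
    rw [hdeg']
    have hn1 : n - 1 = ⌊1 / ρ⌋₊ + 1 := by omega
    rw [hn1]
    push_cast
    nlinarith [hfloor, hinv, hρpos]
  obtain ⟨φc, hφc, hmin⟩ := hkey
  -- small sets are fixed by percStep
  have hfix : ∀ A : Finset (Fin n), A.card ≤ 1 → percStep ⊤ φc A = A := by
    intro A hA
    ext x
    unfold percStep
    simp only [Finset.mem_union, Finset.mem_filter, Finset.mem_univ, true_and]
    constructor
    · rintro (h | h)
      · exact h
      · exfalso
        refine absurd h (not_le.mpr (lt_of_le_of_lt ?_ (hφc x)))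
        have hcard : (@Finset.filter (Fin n) (fun u => (⊤ : SimpleGraph (Fin n)).Adj x u)
            (fun a => Classical.propDecidable _) A).card ≤ 1 :=
          le_trans (@Finset.card_filter_le (Fin n) A _ (fun a => Classical.propDecidable _)) hA
        exact_mod_cast hcard
    · exact Or.inl
  have hsmall : ∀ A : Finset (Fin n), A.card ≤ 1 → ¬ Contagious ⊤ φc A := by
    intro A hA hcont
    obtain ⟨k, hk⟩ := hcont
    have hiter : ∀ m, (percStep ⊤ φc)^[m] A = A := by
      intro m
      induction m with
      | zero => rfl
      | succ m ih => rw [Function.iterate_succ_apply', ih, hfix A hA]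
    rw [hiter k] at hk
    have h : (Finset.univ : Finset (Fin n)).card ≤ 1 := hk ▸ hA
    rw [Finset.card_univ, Fintype.card_fin] at h
    omega
  have hne : {k | ∃ A : Finset (Fin n), A.card = k ∧ Contagious ⊤ φc A}.Nonempty :=
    ⟨n, Finset.univ, by simp, ⟨0, rfl⟩⟩
  have h2 : 2 ≤ minContagious (⊤ : SimpleGraph (Fin n)) ρ := by
    rw [hmin]
    obtain ⟨A, hAcard, hAcont⟩ := Nat.sInf_mem hne
    by_contra h
    push_neg at h
    exact hsmall A (by omega) hAcont
  refine ⟨ρ, hρpos, n, ⊤, SimpleGraph.connected_top_iff.mpr ⟨⟨0, by omega⟩⟩, by omega, ?_⟩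
  have hn : (n : ℝ) = (⌊1 / ρ⌋₊ : ℝ) + 2 := by rw [hndef]; push_cast; ring
  have hρn : ρ * (n : ℝ) ≤ 1 + 2 * ρ := by
    rw [hn]; nlinarith [hfl, hinv, hρpos]
  have hρn1 : 1 ≤ ρ * (n : ℝ) := by
    rw [hn]; nlinarith [hfloor, hinv, hρpos]
  have key : (2 - ε) * ρ * (n : ℝ) ≤ 2 := by
    have h1 : 2 * (ρ * (n : ℝ)) ≤ 2 + 4 * ρ := by linarith
    have h2' : ε ≤ ε * (ρ * (n : ℝ)) := by nlinarith
    have he : (2 - ε) * ρ * (n : ℝ) = 2 * (ρ * (n : ℝ)) - ε * (ρ * (n : ℝ)) := by ring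
    linarith
  have hcast : (2 : ℝ) ≤ (minContagious (⊤ : SimpleGraph (Fin n)) ρ : ℝ) := by
    exact_mod_cast h2
  linarith
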